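/- Let d ≥ 1, M ≥ 1 be integers, U > 0, φ ∈ (0,1), λ, β ≥ 0 with max(λ,β) > 0, and let 1 ≤ l ≤ M. Suppose max(λ,β) < (1−φ)/(2d(1−φ^l)), and suppose there exists ε̄ > 0 such that u_k(ε) > 0 for every 0 ≤ k ≤ l−1 and every 0 < ε ≤ ε̄. Then there exists ε* with 0 < ε* ≤ ε̄ such that U < u_{l−1}(ε*) / (2d·max(λ,β)). -/

import Mathlib

noncomputable def vseq (phi c U : ℝ) : ℕ → ℝ :=
  fun n => Nat.rec U (fun _ v => (v - c) / phi) n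

lemma vseq_zero (phi c U : ℝ) : vseq phi c U 0 = U := rfl
lemma vseq_succ (phi c U : ℝ) (n : ℕ) :
    vseq phi c U (n+1) = (vseq phi c U n - c) / phi := rfl

lemma vseq_key (phi c U : ℝ) (h0 : (0:ℝ) < phi) :
    ∀ n, vseq phi c U n * (phi^n * (1 - phi)) = U*(1-phi) - c*(1 - phi^n) := by
  intro n
  induction n with
  | zero => simp [vseq_zero]
  | succ k ih =>
    have hφ : phi ≠ 0 := ne_of_gt h0
    rw [vseq_succ, pow_succ]
    field_simp
    linear_combination ih

noncomputable def wseq (phi U : ℝ) : ℕ → ℝ :=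
  fun n => Nat.rec 0 (fun k w => (w + U / phi ^ k) / phi) n

lemma wseq_zero (phi U : ℝ) : wseq phi U 0 = 0 := rfl
lemma wseq_succ (phi U : ℝ) (n : ℕ) :
    wseq phi U (n+1) = (wseq phi U n + U / phi ^ n) / phi := rfl

lemma wseq_nonneg (phi U : ℝ) (h0 : 0 < phi) (hU : 0 < U) :
    ∀ n, 0 ≤ wseq phi U n := by
  intro n
  induction n with
  | zero => simp [wseq_zero]
  | succ k ih =>
    rw [wseq_succ]
    have : (0:ℝ) < phi ^ k := pow_pos h0 k
    positivity

attribute [irreducible] vseq wseq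

lemma c_lt_vseq (phi c U : ℝ) (h0 : 0 < phi) (h1 : phi < 1) (l : ℕ) (hl : 1 ≤ l)
    (hcU : c * (1 - phi ^ l) < U * (1 - phi)) :
    c < vseq phi c U (l - 1) := by
  have hval := vseq_key phi c U h0 (l - 1)
  have hpow : (0:ℝ) < phi ^ (l - 1) := pow_pos h0 _
  have hpowl : phi ^ (l - 1) * phi = phi ^ l := by
    rw [← pow_succ]; congr 1; omega
  have hP : 0 < phi ^ (l - 1) * (1 - phi) := mul_pos hpow (by linarith)
  have key : c * (phi ^ (l - 1) * (1 - phi))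
      < vseq phi c U (l - 1) * (phi ^ (l - 1) * (1 - phi)) := by
    have hcp : c * (phi ^ (l - 1) * phi) = c * phi ^ l := by rw [hpowl]
    rw [hval]; nlinarith [hcU, hcp]
  exact lt_of_mul_lt_mul_right key hP.le

/-- Technical lemma for the u-criterion: with `u_l(ε)` defined recursively by `u_0(ε) = U` and
`u_l(ε) = (1/(φl))·(−ε·Σ_{j=0}^{l−1} u_j(ε) − U·max(λ,β)·2d·l + l·u_{l−1}(ε))`, if
`max(λ,β) < (1−φ)/(2d(1−φ^l))` and `u_k(ε) > 0` for every `0 ≤ k ≤ l−1` and `0 < ε ≤ ε̄`,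
then there exists `0 < ε* ≤ ε̄` with `U < u_{l−1}(ε*) / (2d·max(λ,β))`. -/
theorem u_criterion_technical_bound
    (d M : ℕ) (hd : 1 ≤ d) (hM : 1 ≤ M)
    (U : ℝ) (hU : 0 < U)
    (phi : ℝ) (hphi : phi ∈ Set.Ioo (0 : ℝ) 1)
    (lam bet : ℝ) (hlam : 0 ≤ lam) (hbet : 0 ≤ bet) (hmaxpos : 0 < max lam bet)
    (l : ℕ) (hl1 : 1 ≤ l) (hlM : l ≤ M)
    (hbound : max lam bet < (1 - phi) / (2 * (d : ℝ) * (1 - phi ^ l)))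
    (u : ℝ → ℕ → ℝ)
    (hu0 : ∀ ε : ℝ, 0 < ε → u ε 0 = U)
    (hurec : ∀ ε : ℝ, 0 < ε → ∀ n : ℕ, 1 ≤ n → n ≤ M →
      u ε n = (1 / (phi * (n : ℝ))) *
        (-ε * (∑ j ∈ Finset.range n, u ε j)
          - U * max lam bet * (2 * (d : ℝ)) * (n : ℝ) + (n : ℝ) * u ε (n - 1)))
    (εb : ℝ) (hεb : 0 < εb)
    (hupos : ∀ k ≤ l - 1, ∀ ε : ℝ, 0 < ε → ε ≤ εb → 0 < u ε k) :
    ∃ εs : ℝ, 0 < εs ∧ εs ≤ εb ∧ U < u εs (l - 1) / (2 * (d : ℝ) * max lam bet) := by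
  obtain ⟨hphi0, hphi1⟩ := hphi
  set m := max lam bet with hmdef
  set c := U * m * (2 * (d : ℝ)) with hcdef
  have hd1 : (1:ℝ) ≤ (d:ℝ) := by exact_mod_cast hd
  have hdpos : (0:ℝ) < (d:ℝ) := by linarith
  have hm : 0 < m := hmaxpos
  have hc0 : 0 < c := by rw [hcdef]; positivity
  have hφn : ∀ n : ℕ, (0:ℝ) < phi ^ n := fun n => pow_pos hphi0 n
  -- Claim A : upper bound
  have claimA : ∀ n, n ≤ l - 1 → ∀ ε : ℝ, 0 < ε → ε ≤ εb → u ε n ≤ U / phi ^ n := by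
    intro n
    induction n with
    | zero => intro _ ε hε _; simp [hu0 ε hε]
    | succ k ih =>
      intro hkl ε hε hεe
      have hk : k ≤ l - 1 := by omega
      have hrec := hurec ε hε (k+1) (by omega) (by omega)
      simp only [Nat.add_sub_cancel] at hrec
      push_cast at hrec
      have hS : 0 ≤ ∑ j ∈ Finset.range (k+1), u ε j := by
        apply Finset.sum_nonneg
        intro j hj
        have hj' := Finset.mem_range.mp hj
        exact (hupos j (by omega) ε hε hεe).le
      have huk := ih hk ε hε hεe
      have hN : (0:ℝ) < (k:ℝ) + 1 := by positivity
      rw [hrec]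
      have h1 : (-ε * (∑ j ∈ Finset.range (k+1), u ε j) - c * ((k:ℝ)+1) + ((k:ℝ)+1) * u ε k)
          ≤ ((k:ℝ)+1) * (U / phi ^ k) := by
        nlinarith [mul_nonneg hε.le hS, mul_pos hc0 hN,
          mul_le_mul_of_nonneg_left huk hN.le]
      have h2 : (1/(phi*((k:ℝ)+1))) * (((k:ℝ)+1) * (U / phi ^ k)) = U / phi ^ (k+1) := by
        have hφ : phi ≠ 0 := ne_of_gt hphi0
        have hNne : ((k:ℝ)+1) ≠ 0 := ne_of_gt hN
        field_simp
        ring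
      calc (1/(phi*((k:ℝ)+1))) * (-ε * (∑ j ∈ Finset.range (k+1), u ε j)
              - c * ((k:ℝ)+1) + ((k:ℝ)+1) * u ε k)
          ≤ (1/(phi*((k:ℝ)+1))) * (((k:ℝ)+1) * (U / phi ^ k)) := by
            apply mul_le_mul_of_nonneg_left h1 (by positivity)
        _ = U / phi ^ (k+1) := h2
  -- Claim B : lower bound
  have claimB : ∀ n, n ≤ l - 1 → ∀ ε : ℝ, 0 < ε → ε ≤ εb →
      vseq phi c U n - ε * wseq phi U n ≤ u ε n := by
    intro n
    induction n with
    | zero => intro _ ε hε _; simp [hu0 ε hε, vseq_zero, wseq_zero]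
    | succ k ih =>
      intro hkl ε hε hεe
      have hk : k ≤ l - 1 := by omega
      have hrec := hurec ε hε (k+1) (by omega) (by omega)
      simp only [Nat.add_sub_cancel] at hrec
      push_cast at hrec
      have hN : (0:ℝ) < (k:ℝ) + 1 := by positivity
      have hφ : phi ≠ 0 := ne_of_gt hphi0
      have hSb : (∑ j ∈ Finset.range (k+1), u ε j) ≤ ((k:ℝ)+1) * (U / phi ^ k) := by
        have hterm : ∀ j ∈ Finset.range (k+1), u ε j ≤ U / phi ^ k := by
          intro j hj
          have hj' : j ≤ k := Nat.lt_succ_iff.mp (Finset.mem_range.mp hj)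
          have h1 := claimA j (by omega) ε hε hεe
          have h2 : U / phi ^ j ≤ U / phi ^ k :=
            div_le_div_of_nonneg_left hU.le (hφn k)
              (pow_le_pow_of_le_one hphi0.le hphi1.le hj')
          linarith
        calc (∑ j ∈ Finset.range (k+1), u ε j)
            ≤ ∑ _j ∈ Finset.range (k+1), (U / phi ^ k) := Finset.sum_le_sum hterm
          _ = ((k:ℝ)+1) * (U / phi ^ k) := by
              rw [Finset.sum_const, Finset.card_range, nsmul_eq_mul]
              push_cast; ring
      have ihB := ih hk ε hε hεe
      rw [hrec]
      have hE : ((k:ℝ)+1) * (u ε k - c - ε * (U / phi ^ k))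
          ≤ -ε * (∑ j ∈ Finset.range (k+1), u ε j) - c * ((k:ℝ)+1) + ((k:ℝ)+1) * u ε k := by
        nlinarith [mul_le_mul_of_nonneg_left hSb hε.le]
      have key : (u ε k - c - ε * (U / phi ^ k)) / phi
          ≤ (1/(phi*((k:ℝ)+1))) * (-ε * (∑ j ∈ Finset.range (k+1), u ε j)
              - c * ((k:ℝ)+1) + ((k:ℝ)+1) * u ε k) := by
        calc (u ε k - c - ε * (U / phi ^ k)) / phi
            = (1/(phi*((k:ℝ)+1))) * (((k:ℝ)+1) * (u ε k - c - ε * (U / phi ^ k))) := by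
              field_simp
          _ ≤ _ := mul_le_mul_of_nonneg_left hE (by positivity)
      have key2 : vseq phi c U (k+1) - ε * wseq phi U (k+1)
          = ((vseq phi c U k - ε * wseq phi U k) - c - ε * (U / phi ^ k)) / phi := by
        rw [vseq_succ, wseq_succ]; ring
      have key3 : ((vseq phi c U k - ε * wseq phi U k) - c - ε * (U / phi ^ k)) / phi
          ≤ (u ε k - c - ε * (U / phi ^ k)) / phi := by
        gcongr <;> linarith
      linarith [key, key3, key2.le, key2.ge]
  -- c < vseq (l-1)
  have hφl : phi ^ l < 1 := pow_lt_one₀ hphi0.le hphi1 (by omega)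
  have h2d : (0:ℝ) < 2 * (d:ℝ) * (1 - phi ^ l) :=
    mul_pos (by positivity) (by linarith)
  have hb1 : m * (2 * (d:ℝ) * (1 - phi ^ l)) < 1 - phi := (lt_div_iff₀ h2d).mp hbound
  have hcU : c * (1 - phi ^ l) < U * (1 - phi) := by
    calc c * (1 - phi ^ l) = U * (m * (2 * (d:ℝ) * (1 - phi ^ l))) := by rw [hcdef]; ring
      _ < U * (1 - phi) := by exact mul_lt_mul_of_pos_left hb1 hU
  have hcv : c < vseq phi c U (l - 1) := c_lt_vseq phi c U hphi0 hphi1 l hl1 hcU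
  -- choose epsilon
  set v := vseq phi c U (l - 1) with hvdef
  set w := wseq phi U (l - 1) with hwdef
  have hw0 : 0 ≤ w := wseq_nonneg phi U hphi0 hU (l - 1)
  set K := w + 1 with hKdef
  have hK : 0 < K := by linarith
  have hq : 0 < (v - c) / (2 * K) := div_pos (by linarith) (by linarith)
  refine ⟨min εb ((v - c) / (2 * K)), lt_min hεb hq, min_le_left _ _, ?_⟩
  have hεs0 : 0 < min εb ((v - c) / (2 * K)) := lt_min hεb hq
  have hεse : min εb ((v - c) / (2 * K)) ≤ εb := min_le_left _ _
  have hB := claimB (l - 1) le_rfl _ hεs0 hεse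
  have hεs2 : min εb ((v - c) / (2 * K)) ≤ (v - c) / (2 * K) := min_le_right _ _
  have hwK : min εb ((v - c) / (2 * K)) * w ≤ (v - c) / 2 := by
    have h1 : min εb ((v - c) / (2 * K)) * w ≤ ((v - c) / (2 * K)) * K :=
      mul_le_mul hεs2 (by linarith) hw0 (le_of_lt hq)
    have h2 : ((v - c) / (2 * K)) * K = (v - c) / 2 := by
      field_simp
    linarith
  have hugt : c < u (min εb ((v - c) / (2 * K))) (l - 1) := by linarith
  have h2dm : (0:ℝ) < 2 * (d:ℝ) * m := mul_pos (by positivity) hm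
  rw [lt_div_iff₀ h2dm]
  have hUc : U * (2 * (d:ℝ) * m) = c := by rw [hcdef]; ring
  linarith
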